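/- Let L be a nilpotent group, Z a normal subgroup of L such that Z is nilpotent and L/Z' is nilpotent, where Z' is the derived subgroup of Z. Then L is nilpotent (P. Hall's nilpotency criterion). -/

import Mathlib

open Subgroup

namespace HallAux

variable {G : Type*} [Group G]

/-- Iterated commutator of a subgroup with the whole group: `chain H k = [H, G, ..., G]`. -/
def chain (H : Subgroup G) : ℕ → Subgroup G
  | 0 => H
  | n + 1 => ⁅chain H n, (⊤ : Subgroup G)⁆

@[simp] lemma chain_zero (H : Subgroup G) : chain H 0 = H := rfl

lemma chain_succ (H : Subgroup G) (n : ℕ) : chain H (n + 1) = ⁅chain H n, ⊤⁆ := rfl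

instance chain_normal (H : Subgroup G) [h : H.Normal] (n : ℕ) : (chain H n).Normal := by
  induction n with
  | zero => exact h
  | succ n ih => exact @Subgroup.commutator_normal _ _ _ _ ih _

lemma chain_mono {H K : Subgroup G} (h : H ≤ K) (n : ℕ) : chain H n ≤ chain K n := by
  induction n with
  | zero => exact h
  | succ n ih => exact commutator_mono ih le_rfl

lemma chain_le (H : Subgroup G) [H.Normal] (n : ℕ) : chain H n ≤ H := by
  induction n with
  | zero => exact le_rfl
  | succ n ih => exact (commutator_le_left _ _).trans ih

lemma chain_add (H : Subgroup G) (m n : ℕ) : chain H (m + n) = chain (chain H m) n := by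
  induction n with
  | zero => rfl
  | succ n ih => rw [← Nat.add_assoc, chain_succ, ih, chain_succ]

lemma chain_top (n : ℕ) : chain (⊤ : Subgroup G) n = (⊤ : Subgroup G).lowerCentralSeries n := by
  induction n with
  | zero => rfl
  | succ n ih => rw [chain_succ, ih]; rfl

/-- Commutator-with-`T`-quotient transfer. -/
lemma commutator_le_iff_map {T : Subgroup G} [T.Normal] (P Q : Subgroup G) :
    ⁅P, Q⁆ ≤ T ↔ ⁅Subgroup.map (QuotientGroup.mk' T) P, Subgroup.map (QuotientGroup.mk' T) Q⁆ = ⊥ := by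
  rw [← Subgroup.map_commutator, Subgroup.map_eq_bot_iff, QuotientGroup.ker_mk']

/-- The three subgroups lemma, `≤` version. -/
lemma threeSubgroups_le {X Y Z T : Subgroup G} [T.Normal]
    (h1 : ⁅⁅Y, Z⁆, X⁆ ≤ T) (h2 : ⁅⁅Z, X⁆, Y⁆ ≤ T) : ⁅⁅X, Y⁆, Z⁆ ≤ T := by
  rw [commutator_le_iff_map, Subgroup.map_commutator] at h1 h2 ⊢
  exact commutator_commutator_eq_bot_of_rotate h1 h2

lemma commutator_sup_le {A B C T : Subgroup G} [T.Normal]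
    (hA : ⁅A, C⁆ ≤ T) (hB : ⁅B, C⁆ ≤ T) : ⁅A ⊔ B, C⁆ ≤ T := by
  rw [commutator_le_iff_map] at hA hB ⊢
  rw [Subgroup.map_sup]
  rw [commutator_eq_bot_iff_le_centralizer] at hA hB ⊢
  exact sup_le hA hB

lemma chain_sup_le (A B : Subgroup G) [A.Normal] [B.Normal] (n : ℕ) :
    chain (A ⊔ B) n ≤ chain A n ⊔ chain B n := by
  induction n with
  | zero => exact le_rfl
  | succ n ih =>
    rw [chain_succ]
    refine le_trans (commutator_mono ih le_rfl) ?_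
    exact commutator_sup_le (T := chain A (n + 1) ⊔ chain B (n + 1)) le_sup_left le_sup_right

/-- The relative lower central series of a normal subgroup: `gser N i = γ_{i+1}(N)`-style,
`gser N 0 = N`, `gser N (i+1) = [gser N i, N]`. -/
def gser (N : Subgroup G) : ℕ → Subgroup G
  | 0 => N
  | i + 1 => ⁅gser N i, N⁆

@[simp] lemma gser_zero (N : Subgroup G) : gser N 0 = N := rfl

lemma gser_succ (N : Subgroup G) (i : ℕ) : gser N (i + 1) = ⁅gser N i, N⁆ := rfl

instance gser_normal (N : Subgroup G) [h : N.Normal] (i : ℕ) : (gser N i).Normal := by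
  induction i with
  | zero => exact h
  | succ i ih => exact @Subgroup.commutator_normal _ _ _ _ ih h

lemma gser_le (N : Subgroup G) [N.Normal] (i : ℕ) : gser N i ≤ N := by
  induction i with
  | zero => exact le_rfl
  | succ i ih => exact commutator_le_right _ _

lemma map_subtype_lowerCentralSeries (N : Subgroup G) (i : ℕ) :
    Subgroup.map N.subtype ((⊤ : Subgroup ↥N).lowerCentralSeries i) = gser N i := by
  induction i with
  | zero =>
    show Subgroup.map N.subtype ⊤ = N
    rw [← MonoidHom.range_eq_map, Subgroup.subtype_range]
  | succ i ih =>
    have h : (⊤ : Subgroup ↥N).lowerCentralSeries (i + 1) = ⁅(⊤ : Subgroup ↥N).lowerCentralSeries i, ⊤⁆ := rfl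
    rw [h, Subgroup.map_commutator, ih, gser_succ, ← MonoidHom.range_eq_map,
      Subgroup.subtype_range]

end HallAux

open HallAux Subgroup

/-- P. Hall's nilpotency criterion: if `Z` is a normal subgroup of `L` such that
`Z` is nilpotent and `L/Z'` is nilpotent (`Z' = [Z,Z]` the derived subgroup of
`Z`), then `L` is nilpotent. -/
theorem stmt13 {L : Type*} [Group L] (Z : Subgroup L) [Z.Normal]
    (hZ : Group.IsNilpotent ↥Z)
    (hq : Group.IsNilpotent (L ⧸ (⁅Z, Z⁆ : Subgroup L))) :
    Group.IsNilpotent L := by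
  -- notation
  set Z' : Subgroup L := ⁅Z, Z⁆ with hZ'def
  -- `Z` nilpotent: some `gser Z c = ⊥`.
  obtain ⟨c, hc⟩ : ∃ c, gser Z c = ⊥ := by
    obtain ⟨c, hc⟩ := _root_.nilpotent_iff_lowerCentralSeries.mp hZ
    exact ⟨c, by rw [← map_subtype_lowerCentralSeries, hc, Subgroup.map_bot]⟩
  -- images of chains in the quotient are inside the lower central series of the quotient
  have hmapchain : ∀ (H : Subgroup L) (k : ℕ),
      Subgroup.map (QuotientGroup.mk' Z') (chain H k) ≤
        (⊤ : Subgroup (L ⧸ Z')).lowerCentralSeries k := by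
    intro H k
    induction k with
    | zero => exact le_top
    | succ k ih =>
      rw [chain_succ, Subgroup.map_commutator]
      have : (⊤ : Subgroup (L ⧸ Z')).lowerCentralSeries (k + 1) = ⁅(⊤ : Subgroup (L ⧸ Z')).lowerCentralSeries k, ⊤⁆ := rfl
      rw [this]
      exact commutator_mono ih le_top
  -- quotient nilpotent: some `d` with `chain H d ≤ Z'` for every `H`.
  obtain ⟨d, hd⟩ := _root_.nilpotent_iff_lowerCentralSeries.mp hq
  have hchainZ' : ∀ H : Subgroup L, chain H d ≤ Z' := by
    intro H
    have := hmapchain H d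
    rw [hd, le_bot_iff, Subgroup.map_eq_bot_iff, QuotientGroup.ker_mk'] at this
    exact this
  have hNd : chain Z d ≤ gser Z 1 := hchainZ' Z
  -- `[gser Z i, Z'] ≤ gser Z (i+2)` via the three subgroups lemma
  have hZ'comm : ∀ i : ℕ, ⁅gser Z i, Z'⁆ ≤ gser Z (i + 2) := by
    intro i
    refine le_trans (commutator_comm_le _ _) ?_
    show ⁅⁅Z, Z⁆, gser Z i⁆ ≤ gser Z (i + 2)
    refine threeSubgroups_le ?_ ?_
    · calc ⁅⁅Z, gser Z i⁆, Z⁆ ≤ ⁅⁅gser Z i, Z⁆, Z⁆ :=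
            commutator_mono (commutator_comm_le _ _) le_rfl
        _ ≤ gser Z (i + 2) := le_of_eq rfl
    · exact le_of_eq rfl
  -- Core lemma: each layer of `gser` is reached by a chain from the previous one.
  have core : ∀ i : ℕ, ∃ K : ℕ, chain (gser Z i) K ≤ gser Z (i + 1) := by
    intro i
    induction i with
    | zero => exact ⟨d, hNd⟩
    | succ i ih =>
      obtain ⟨K, hK⟩ := ih
      -- double induction on fuel
      have main : ∀ t a b : ℕ, K + d ≤ a + b + t →
          ∃ n, chain ⁅chain (gser Z i) a, chain Z b⁆ n ≤ gser Z (i + 2) := by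
        intro t
        induction t with
        | zero =>
          intro a b hab
          refine ⟨0, ?_⟩
          rw [chain_zero]
          rcases le_or_gt K a with ha | ha
          · -- a ≥ K : left factor already inside gser Z (i+1)
            have h1 : chain (gser Z i) a ≤ gser Z (i + 1) := by
              have : chain (gser Z i) a = chain (chain (gser Z i) K) (a - K) := by
                rw [← chain_add, Nat.add_sub_cancel' ha]
              rw [this]
              exact le_trans (chain_mono hK _) (chain_le _ _)
            calc ⁅chain (gser Z i) a, chain Z b⁆ ≤ ⁅gser Z (i + 1), Z⁆ :=
                  commutator_mono h1 (chain_le Z b)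
              _ = gser Z (i + 2) := rfl
          · -- then b ≥ d : right factor inside Z'
            have hb : d ≤ b := by omega
            have h2 : chain Z b ≤ Z' := by
              have : chain Z b = chain (chain Z d) (b - d) := by
                rw [← chain_add, Nat.add_sub_cancel' hb]
              rw [this]
              exact le_trans (chain_mono hNd _) (chain_le _ _)
            calc ⁅chain (gser Z i) a, chain Z b⁆ ≤ ⁅gser Z i, Z'⁆ :=
                  commutator_mono (chain_le _ _) h2
              _ ≤ gser Z (i + 2) := hZ'comm i
        | succ t iht =>
          intro a b hab
          obtain ⟨n₁, h₁⟩ := iht (a + 1) b (by omega)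
          obtain ⟨n₂, h₂⟩ := iht a (b + 1) (by omega)
          set A := ⁅chain (gser Z i) (a + 1), chain Z b⁆ with hA
          set B := ⁅chain (gser Z i) a, chain Z (b + 1)⁆ with hB
          refine ⟨1 + (n₁ + n₂), ?_⟩
          have hstep : chain ⁅chain (gser Z i) a, chain Z b⁆ 1 ≤ A ⊔ B := by
            rw [chain_succ, chain_zero]
            refine threeSubgroups_le ?_ ?_
            · -- ⁅⁅chain Z b, ⊤⁆, chain (gser Z i) a⁆ ≤ A ⊔ B
              calc ⁅⁅chain Z b, ⊤⁆, chain (gser Z i) a⁆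
                  = ⁅chain Z (b + 1), chain (gser Z i) a⁆ := rfl
                _ ≤ ⁅chain (gser Z i) a, chain Z (b + 1)⁆ := commutator_comm_le _ _
                _ ≤ A ⊔ B := le_sup_right
            · -- ⁅⁅⊤, chain (gser Z i) a⁆, chain Z b⁆ ≤ A ⊔ B
              calc ⁅⁅(⊤ : Subgroup L), chain (gser Z i) a⁆, chain Z b⁆
                  ≤ ⁅⁅chain (gser Z i) a, ⊤⁆, chain Z b⁆ :=
                    commutator_mono (commutator_comm_le _ _) le_rfl
                _ = ⁅chain (gser Z i) (a + 1), chain Z b⁆ := rfl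
                _ ≤ A ⊔ B := le_sup_left
          calc chain ⁅chain (gser Z i) a, chain Z b⁆ (1 + (n₁ + n₂))
              = chain (chain ⁅chain (gser Z i) a, chain Z b⁆ 1) (n₁ + n₂) := chain_add _ _ _
            _ ≤ chain (A ⊔ B) (n₁ + n₂) := chain_mono hstep _
            _ ≤ chain A (n₁ + n₂) ⊔ chain B (n₁ + n₂) := chain_sup_le A B _
            _ ≤ gser Z (i + 2) := by
                refine sup_le ?_ ?_
                · have : chain A (n₁ + n₂) = chain (chain A n₁) n₂ := chain_add _ _ _
                  rw [this]
                  exact le_trans (chain_mono h₁ _) (chain_le _ _)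
                · have : chain B (n₁ + n₂) = chain (chain B n₂) n₁ := by
                    rw [← chain_add, Nat.add_comm]
                  rw [this]
                  exact le_trans (chain_mono h₂ _) (chain_le _ _)
      obtain ⟨n, hn⟩ := main (K + d) 0 0 (by omega)
      exact ⟨n, hn⟩
  -- assemble: `chain Z M ≤ gser Z i` for all `i`
  have reach : ∀ i : ℕ, ∃ M : ℕ, chain Z M ≤ gser Z i := by
    intro i
    induction i with
    | zero => exact ⟨0, le_rfl⟩
    | succ i ih =>
      obtain ⟨M, hM⟩ := ih
      obtain ⟨K, hK⟩ := core i
      refine ⟨M + K, ?_⟩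
      rw [chain_add]
      exact le_trans (chain_mono hM _) hK
  obtain ⟨M, hM⟩ := reach c
  rw [hc] at hM
  -- conclude
  rw [_root_.nilpotent_iff_lowerCentralSeries]
  refine ⟨d + M, ?_⟩
  rw [← chain_top, chain_add]
  have h1 : chain (⊤ : Subgroup L) d ≤ Z := le_trans (hchainZ' ⊤) (commutator_le_right _ _)
  exact le_bot_iff.mp (le_trans (chain_mono h1 _) hM)
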